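/- Let n ≥ 1, let σ be a permutation of {1,2,3}, and let ψ₁, ψ₂, ψ₃ be linear automorphisms of Matrix (Fin n) (Fin n) ℂ. Suppose the linear automorphism Ψ of W determined by Ψ(x₁⊗x₂⊗x₃) = ψ₁(x_{σ⁻¹(1)}) ⊗ ψ₂(x_{σ⁻¹(2)}) ⊗ ψ₃(x_{σ⁻¹(3)}) satisfies Ψ(Mₙ) = Mₙ. Then there exist invertible matrices a, b, c ∈ Matrix (Fin n) (Fin n) ℂ such that Ψ = φ_{a,b,c} ∘ d, where d is one of the six maps id, κ, κ², τ, κ∘τ, κ²∘τ. (This expresses that the symmetry group of Mₙ is PGLₙ×PGLₙ×PGLₙ extended by the dihedral group D₃.) -/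

import Mathlib

open scoped TensorProduct
open Matrix

noncomputable section

abbrev MatN (n : ℕ) := Matrix (Fin n) (Fin n) ℂ
abbrev WN (n : ℕ) := MatN n ⊗[ℂ] (MatN n ⊗[ℂ] MatN n)

/-- the n×n matrix multiplication tensor -/
def MatMul (n : ℕ) : WN n :=
  ∑ i : Fin n, ∑ j : Fin n, ∑ k : Fin n,
    single i j (1 : ℂ) ⊗ₜ[ℂ] (single j k (1 : ℂ) ⊗ₜ[ℂ] single k i (1 : ℂ))

/-- x ↦ p * x * q -/
def sandwich (n : ℕ) (p q : MatN n) : MatN n →ₗ[ℂ] MatN n :=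
  (LinearMap.mulLeft ℂ p).comp (LinearMap.mulRight ℂ q)

/-- φ_{a,b,c} : x⊗y⊗z ↦ (a x b⁻¹)⊗(b y c⁻¹)⊗(c z a⁻¹) -/
def phiMap (n : ℕ) (a b c : MatN n) : WN n →ₗ[ℂ] WN n :=
  TensorProduct.map (sandwich n a b⁻¹)
    (TensorProduct.map (sandwich n b c⁻¹) (sandwich n c a⁻¹))

def cycOnce (n : ℕ) : WN n ≃ₗ[ℂ] WN n :=
  (TensorProduct.comm ℂ (MatN n) (MatN n ⊗[ℂ] MatN n)).trans
    (TensorProduct.assoc ℂ (MatN n) (MatN n) (MatN n))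

/-- κ : x⊗y⊗z ↦ z⊗x⊗y -/
def kappaMap (n : ℕ) : WN n →ₗ[ℂ] WN n := ((cycOnce n).trans (cycOnce n)).toLinearMap

def tLM (n : ℕ) : MatN n →ₗ[ℂ] MatN n := (transposeLinearEquiv (Fin n) (Fin n) ℂ ℂ).toLinearMap

/-- τ : x⊗y⊗z ↦ xᵀ⊗zᵀ⊗yᵀ -/
def tauMap (n : ℕ) : WN n →ₗ[ℂ] WN n :=
  TensorProduct.map (tLM n)
    ((TensorProduct.comm ℂ (MatN n) (MatN n)).toLinearMap.comp
      (TensorProduct.map (tLM n) (tLM n)))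


lemma kappaMap_tmul (n : ℕ) (x y z : MatN n) :
    kappaMap n (x ⊗ₜ[ℂ] (y ⊗ₜ[ℂ] z)) = z ⊗ₜ[ℂ] (x ⊗ₜ[ℂ] y) := by
  simp [kappaMap, cycOnce]

lemma phiMap_tmul (n : ℕ) (a b c x y z : MatN n) :
    phiMap n a b c (x ⊗ₜ[ℂ] (y ⊗ₜ[ℂ] z)) =
      (a * x * b⁻¹) ⊗ₜ[ℂ] ((b * y * c⁻¹) ⊗ₜ[ℂ] (c * z * a⁻¹)) := by
  simp [phiMap, sandwich, mul_assoc]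

lemma tauMap_tmul (n : ℕ) (x y z : MatN n) :
    tauMap n (x ⊗ₜ[ℂ] (y ⊗ₜ[ℂ] z)) = xᵀ ⊗ₜ[ℂ] (zᵀ ⊗ₜ[ℂ] yᵀ) := by
  simp [tauMap, tLM]

namespace SymAux

variable {n : ℕ}

/-- abbreviation for matrix units -/
abbrev BE (i j : Fin n) : MatN n := single i j (1 : ℂ)

lemma std_smul (i j : Fin n) (c : ℂ) : single i j c = c • BE i j := by
  rw [smul_single, smul_eq_mul, mul_one]

lemma mat_eq_sum (A : MatN n) : A = ∑ i, ∑ j, (A i j) • BE i j := by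
  conv_rhs => simp only [smul_single, smul_eq_mul, mul_one]
  exact matrix_eq_sum_single A

lemma trace_E_mul (i j : Fin n) (Y : MatN n) : trace (BE i j * Y) = Y j i := by
  classical
  rw [trace]
  rw [Finset.sum_eq_single i]
  · simp
  · intro b _ hb
    exact single_mul_apply_of_ne 1 i j b b hb Y
  · simp

lemma trace_mul_E (i j : Fin n) (Y : MatN n) : trace (Y * BE i j) = Y j i := by
  rw [trace_mul_comm, trace_E_mul]

lemma trace_ext {A B : MatN n} (h : ∀ Y, trace (A * Y) = trace (B * Y)) : A = B := by
  ext i j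
  have := h (BE j i)
  rwa [trace_mul_E, trace_mul_E] at this

lemma trace_ext' {Y Z : MatN n} (h : ∀ A, trace (A * Y) = trace (A * Z)) : Y = Z := by
  ext i j
  have := h (BE j i)
  rwa [trace_E_mul, trace_E_mul] at this

/-- trace-form adjoint of a linear map on matrices -/
def adjT (f : MatN n →ₗ[ℂ] MatN n) : MatN n →ₗ[ℂ] MatN n where
  toFun Y := Matrix.of fun k j => trace (f (BE j k) * Y)
  map_add' Y Z := by
    ext k j
    simp [mul_add]
  map_smul' c Y := by
    ext k j
    simp [Matrix.mul_smul]

lemma adjT_apply (f : MatN n →ₗ[ℂ] MatN n) (Y : MatN n) (k j : Fin n) :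
    adjT f Y k j = trace (f (BE j k) * Y) := rfl

lemma adjT_spec (f : MatN n →ₗ[ℂ] MatN n) (A Y : MatN n) :
    trace (f A * Y) = trace (A * adjT f Y) := by
  conv_lhs => rw [mat_eq_sum A]
  conv_rhs => rw [mat_eq_sum A]
  simp only [map_sum, LinearMap.map_smul, Finset.sum_mul, smul_mul_assoc, trace_sum, trace_smul]
  refine Finset.sum_congr rfl fun i _ => Finset.sum_congr rfl fun j _ => ?_
  rw [trace_E_mul, adjT_apply]


lemma adjT_comp (f g : MatN n →ₗ[ℂ] MatN n) :
    adjT (f ∘ₗ g) = adjT g ∘ₗ adjT f := by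
  refine LinearMap.ext fun Y => trace_ext' fun A => ?_
  simp only [LinearMap.comp_apply]
  rw [← adjT_spec g, ← adjT_spec f, ← adjT_spec (f ∘ₗ g)]
  simp only [LinearMap.comp_apply]

lemma adjT_id : adjT (LinearMap.id : MatN n →ₗ[ℂ] MatN n) = LinearMap.id := by
  refine LinearMap.ext fun Y => trace_ext' fun A => ?_
  rw [← adjT_spec]
  rfl

lemma adjT_inj {f g : MatN n →ₗ[ℂ] MatN n} (h : adjT f = adjT g) : f = g := by
  refine LinearMap.ext fun A => trace_ext fun Y => ?_
  rw [adjT_spec f, adjT_spec g, h]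

/-- the adjoint of a linear automorphism, as an automorphism -/
def adjE (χ : MatN n ≃ₗ[ℂ] MatN n) : MatN n ≃ₗ[ℂ] MatN n :=
  LinearEquiv.ofLinear (adjT χ.toLinearMap) (adjT χ.symm.toLinearMap)
    (by rw [← adjT_comp]
        have : (χ.symm.toLinearMap ∘ₗ χ.toLinearMap) = LinearMap.id := by
          ext A; simp
        rw [this, adjT_id])
    (by rw [← adjT_comp]
        have : (χ.toLinearMap ∘ₗ χ.symm.toLinearMap) = LinearMap.id := by
          ext A; simp
        rw [this, adjT_id])

@[simp] lemma adjE_apply (χ : MatN n ≃ₗ[ℂ] MatN n) (Y : MatN n) :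
    adjE χ Y = adjT χ.toLinearMap Y := rfl

/-- x ↦ p * x * q -/
private def sw (p q : MatN n) : MatN n →ₗ[ℂ] MatN n :=
  (LinearMap.mulLeft ℂ p).comp (LinearMap.mulRight ℂ q)

lemma sw_apply (p q x : MatN n) : sw p q x = p * x * q := by
  simp [sw, mul_assoc]

lemma adjT_sw (p q : MatN n) : adjT (sw p q) = sw q p := by
  refine LinearMap.ext fun Y => ?_
  ext k j
  rw [adjT_apply, sw_apply, sw_apply]
  rw [mul_assoc, mul_assoc, trace_mul_comm, mul_assoc, trace_E_mul]


/-- trace functional `a ↦ tr (a y)` -/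
def trf (y : MatN n) : MatN n →ₗ[ℂ] ℂ :=
  (Matrix.traceLinearMap (Fin n) ℂ ℂ).comp (LinearMap.mulRight ℂ y)

lemma trf_apply (y a : MatN n) : trf y a = trace (a * y) := rfl

/-- contraction of the last two tensor factors against trace functionals -/
def contr (y z : MatN n) : WN n →ₗ[ℂ] MatN n :=
  (TensorProduct.rid ℂ (MatN n)).toLinearMap.comp
    (TensorProduct.map LinearMap.id
      ((LinearMap.mul' ℂ ℂ).comp (TensorProduct.map (trf y) (trf z))))

lemma contr_tmul (y z x y' z' : MatN n) :
    contr y z (x ⊗ₜ[ℂ] (y' ⊗ₜ[ℂ] z')) = (trace (y' * y) * trace (z' * z)) • x := by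
  simp [contr, trf_apply, mul_comm]

lemma contr_MatMul (y z : MatN n) : contr y z (MatMul n) = z * y := by
  rw [MatMul]
  simp only [map_sum, contr_tmul, trace_E_mul]
  calc (∑ i, ∑ j, ∑ k, (y k j * z i k) • (BE i j : MatN n))
      = ∑ i, ∑ j, ((z * y) i j) • (BE i j : MatN n) := by
        refine Finset.sum_congr rfl fun i _ => Finset.sum_congr rfl fun j _ => ?_
        rw [← Finset.sum_smul, mul_apply]
        congr 1
        exact Finset.sum_congr rfl fun k _ => mul_comm _ _
    _ = z * y := (mat_eq_sum _).symm

lemma contr_map (χ₁ χ₂ χ₃ : MatN n →ₗ[ℂ] MatN n) (y z : MatN n) :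
    contr y z (TensorProduct.map χ₁ (TensorProduct.map χ₂ χ₃) (MatMul n)) =
      χ₁ (adjT χ₃ z * adjT χ₂ y) := by
  rw [MatMul]
  simp only [map_sum, TensorProduct.map_tmul, contr_tmul]
  calc (∑ i, ∑ j, ∑ k, (trace (χ₂ (BE j k) * y) * trace (χ₃ (BE k i) * z)) • χ₁ (BE i j))
      = ∑ i, ∑ j, ((adjT χ₃ z * adjT χ₂ y) i j) • χ₁ (BE i j) := by
        refine Finset.sum_congr rfl fun i _ => Finset.sum_congr rfl fun j _ => ?_
        rw [← Finset.sum_smul, mul_apply]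
        congr 1
        refine Finset.sum_congr rfl fun k _ => ?_
        rw [adjT_apply, adjT_apply, mul_comm]
    _ = χ₁ (adjT χ₃ z * adjT χ₂ y) := by
        conv_rhs => rw [mat_eq_sum (adjT χ₃ z * adjT χ₂ y)]
        simp only [map_sum, LinearMap.map_smul]

lemma key_eq (χ₁ χ₂ χ₃ : MatN n ≃ₗ[ℂ] MatN n)
    (h : TensorProduct.map χ₁.toLinearMap (TensorProduct.map χ₂.toLinearMap χ₃.toLinearMap)
          (MatMul n) = MatMul n) (y z : MatN n) :
    χ₁ (adjT χ₃.toLinearMap z * adjT χ₂.toLinearMap y) = z * y := by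
  have h2 := congrArg (contr y z) h
  rwa [contr_map, contr_MatMul] at h2


/-- Skolem–Noether for the matrix algebra: any injective multiplicative linear endomorphism
intertwines with some invertible matrix. -/
lemma skolem (hn : 1 ≤ n) (δ : MatN n →ₗ[ℂ] MatN n) (hinj : Function.Injective δ)
    (hmul : ∀ x y : MatN n, δ (x * y) = δ x * δ y) :
    ∃ p : MatN n, IsUnit p ∧ ∀ x, δ x * p = p * x := by
  classical
  set i0 : Fin n := ⟨0, hn⟩ with hi0
  have hEne : δ (BE i0 i0) ≠ 0 := by
    intro h0
    have : (BE i0 i0 : MatN n) = 0 := hinj (by rw [h0, map_zero])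
    have := congrFun (congrFun this i0) i0
    simp at this
  obtain ⟨wv, hwv⟩ : ∃ wv : Fin n → ℂ, δ (BE i0 i0) *ᵥ wv ≠ 0 := by
    by_contra hall
    push_neg at hall
    apply hEne
    ext i j
    have := congrFun (hall (Pi.single j 1)) i
    rw [mulVec_single] at this
    simpa using this
  obtain ⟨v, hvdef⟩ : ∃ v, v = δ (BE i0 i0) *ᵥ wv := ⟨_, rfl⟩
  have hvne : v ≠ 0 := hvdef ▸ hwv
  have hEE : (BE i0 i0 : MatN n) * BE i0 i0 = BE i0 i0 := by
    rw [single_mul_single_same, one_mul]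
  have hv : δ (BE i0 i0) *ᵥ v = v := by
    rw [hvdef, mulVec_mulVec, ← hmul, hEE]
  clear hvdef hwv
  set p : MatN n := Matrix.of fun i j => (δ (BE j i0) *ᵥ v) i with hp
  have hEp : ∀ a b : Fin n, δ (BE a b) * p = p * BE a b := by
    intro a b
    ext i k
    have hl : (δ (BE a b) * p) i k = (δ (BE a b * BE k i0) *ᵥ v) i := by
      rw [hmul, ← mulVec_mulVec]
      simp [mul_apply, mulVec, dotProduct, hp]
    rw [hl]
    rcases eq_or_ne b k with rfl | hbk
    · rw [single_mul_single_same, one_mul, mul_single_apply_same]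
      simp [hp]
    · rw [single_mul_single_of_ne _ _ _ _ hbk, map_zero, zero_mulVec,
        mul_single_apply_of_ne _ _ _ _ _ (Ne.symm hbk)]
      rfl
  have hpc : ∀ c : Fin n → ℂ, p *ᵥ c = δ (∑ j, c j • BE j i0) *ᵥ v := by
    intro c
    ext i
    rw [map_sum]
    simp only [mulVec, dotProduct, hp, Matrix.sum_apply, of_apply, LinearMap.map_smul,
      Matrix.smul_apply, smul_eq_mul, Finset.sum_mul]
    rw [Finset.sum_comm]
    refine Finset.sum_congr rfl fun m _ => Finset.sum_congr rfl fun x _ => by ring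
  have hpu : IsUnit p := by
    rw [Matrix.isUnit_iff_isUnit_det, isUnit_iff_ne_zero]
    intro hdet
    obtain ⟨c, hcne, hc0⟩ := (Matrix.exists_mulVec_eq_zero_iff).2 hdet
    obtain ⟨j₀, hj₀⟩ := Function.ne_iff.1 hcne
    have hAv : δ (∑ j, c j • BE j i0) *ᵥ v = 0 := by rw [← hpc]; exact hc0
    have hEA : (BE i0 j₀ : MatN n) * (∑ j, c j • BE j i0) = c j₀ • BE i0 i0 := by
      rw [Finset.mul_sum]
      rw [Finset.sum_eq_single j₀]
      · rw [mul_smul_comm, single_mul_single_same, one_mul]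
      · intro j _ hj
        rw [mul_smul_comm, single_mul_single_of_ne _ _ _ _ (Ne.symm hj), smul_zero]
      · simp
    have : c j₀ • v = 0 := by
      calc c j₀ • v = δ (c j₀ • BE i0 i0) *ᵥ v := by
            rw [LinearMap.map_smul, smul_mulVec, hv]
        _ = δ (BE i0 j₀ * (∑ j, c j • BE j i0)) *ᵥ v := by rw [hEA]
        _ = δ (BE i0 j₀) *ᵥ (δ (∑ j, c j • BE j i0) *ᵥ v) := by
            rw [hmul, ← mulVec_mulVec]
        _ = 0 := by rw [hAv, mulVec_zero]
    refine hvne ((smul_eq_zero.1 this).resolve_left ?_)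
    simpa using hj₀
  refine ⟨p, hpu, fun x => ?_⟩
  conv_lhs => rw [mat_eq_sum x]
  conv_rhs => rw [mat_eq_sum x]
  rw [map_sum, Finset.sum_mul, Finset.mul_sum]
  refine Finset.sum_congr rfl fun i _ => ?_
  rw [map_sum, Finset.sum_mul, Finset.mul_sum]
  refine Finset.sum_congr rfl fun j _ => ?_
  rw [LinearMap.map_smul, smul_mul_assoc, mul_smul_comm, hEp]


lemma core (hn : 1 ≤ n) (χ₁ χ₂ χ₃ : MatN n ≃ₗ[ℂ] MatN n)
    (h : TensorProduct.map χ₁.toLinearMap (TensorProduct.map χ₂.toLinearMap χ₃.toLinearMap)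
          (MatMul n) = MatMul n) :
    ∃ a b c : MatN n, IsUnit a ∧ IsUnit b ∧ IsUnit c ∧
      (∀ x, χ₁ x = a * x * b⁻¹) ∧ (∀ y, χ₂ y = b * y * c⁻¹) ∧ (∀ z, χ₃ z = c * z * a⁻¹) := by
  classical
  have K : ∀ Y Z : MatN n, χ₁ (Z * Y) = (adjE χ₃).symm Z * (adjE χ₂).symm Y := by
    intro Y Z
    have h2 := key_eq χ₁ χ₂ χ₃ h ((adjE χ₂).symm Y) ((adjE χ₃).symm Z)
    rwa [show adjT χ₃.toLinearMap ((adjE χ₃).symm Z) = Z from (adjE χ₃).apply_symm_apply Z,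
         show adjT χ₂.toLinearMap ((adjE χ₂).symm Y) = Y from (adjE χ₂).apply_symm_apply Y] at h2
  have hu : IsUnit ((adjE χ₂).symm 1) := by
    have h1 : (adjE χ₃).symm (χ₁.symm 1) * (adjE χ₂).symm 1 = 1 := by
      rw [show (adjE χ₃).symm (χ₁.symm 1) * (adjE χ₂).symm 1 = χ₁ (χ₁.symm 1) from
        (by simpa using (K 1 (χ₁.symm 1)).symm), χ₁.apply_symm_apply]
    exact isUnit_iff_exists.2 ⟨_, mul_eq_one_comm.mp h1, h1⟩
  have hw : IsUnit ((adjE χ₃).symm 1) := by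
    have h1 : (adjE χ₃).symm 1 * (adjE χ₂).symm (χ₁.symm 1) = 1 := by
      rw [show (adjE χ₃).symm 1 * (adjE χ₂).symm (χ₁.symm 1) = χ₁ (χ₁.symm 1) from
        (by simpa using (K (χ₁.symm 1) 1).symm), χ₁.apply_symm_apply]
    exact isUnit_iff_exists.2 ⟨_, h1, mul_eq_one_comm.mp h1⟩
  set U := hu.unit with hUdef
  set W := hw.unit with hWdef
  have hU : (U : MatN n) = (adjE χ₂).symm 1 := hu.unit_spec
  have hW : (W : MatN n) = (adjE χ₃).symm 1 := hw.unit_spec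
  have hGu : ∀ Z, χ₁ Z = (adjE χ₃).symm Z * (U : MatN n) := by
    intro Z; rw [hU]; simpa using K 1 Z
  have hwB : ∀ Y, χ₁ Y = (W : MatN n) * (adjE χ₂).symm Y := by
    intro Y; rw [hW]; simpa using K Y 1
  set δ : MatN n →ₗ[ℂ] MatN n :=
    (LinearMap.mulLeft ℂ ((↑U⁻¹ : MatN n) * (↑W⁻¹ : MatN n))).comp χ₁.toLinearMap with hδdef
  have hδx : ∀ x, δ x = (↑U⁻¹ : MatN n) * ((↑W⁻¹ : MatN n) * χ₁ x) := by
    intro x; simp [hδdef, LinearMap.mulLeft_apply, mul_assoc]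
  have hxδ : ∀ x, χ₁ x = (W : MatN n) * ((U : MatN n) * δ x) := by
    intro x
    rw [hδx]
    simp only [Units.mul_inv_cancel_left]
  have hinj : Function.Injective δ := by
    intro x y hxy
    apply χ₁.injective
    rw [hxδ x, hxδ y, hxy]
  have hmulδ : ∀ x y : MatN n, δ (x * y) = δ x * δ y := by
    intro x y
    rw [hδx, hδx, hδx, K y x, hGu x, hwB y]
    simp only [mul_assoc, Units.mul_inv_cancel_left, Units.inv_mul_cancel_left,
      Units.mul_inv, Units.inv_mul, mul_one, one_mul]
  obtain ⟨p, hpu, hpδ⟩ := skolem hn δ hinj hmulδ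
  set P := hpu.unit with hPdef
  have hP : (P : MatN n) = p := hpu.unit_spec
  rw [← hP] at hpδ
  have hδp : ∀ x, δ x = (P : MatN n) * x * (↑P⁻¹ : MatN n) := by
    intro x
    rw [← hpδ x]
    rw [mul_assoc, Units.mul_inv, mul_one]
  have hχ₁ : ∀ x, χ₁ x = (W : MatN n) * ((U : MatN n) * ((P : MatN n) * x * (↑P⁻¹ : MatN n))) := by
    intro x; rw [hxδ, hδp]
  -- closed forms of the adjoint inverses
  have hB : ∀ X, (adjE χ₂).symm X =
      (U : MatN n) * ((P : MatN n) * X * (↑P⁻¹ : MatN n)) := by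
    intro X
    have h1 := hwB X
    rw [hχ₁ X] at h1
    have := congrArg (fun t => (↑W⁻¹ : MatN n) * t) h1.symm
    simpa only [Units.inv_mul_cancel_left] using this
  have hG : ∀ Z, (adjE χ₃).symm Z =
      (W : MatN n) * ((U : MatN n) * ((P : MatN n) * Z * (↑P⁻¹ : MatN n))) * (↑U⁻¹ : MatN n) := by
    intro Z
    have h1 := hGu Z
    rw [hχ₁ Z] at h1
    have := congrArg (fun t => t * (↑U⁻¹ : MatN n)) h1.symm
    simpa only [mul_assoc, Units.mul_inv, mul_one] using this
  -- identify adjT χ₂ and adjT χ₃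
  have hadj2 : adjT χ₂.toLinearMap = sw ((↑P⁻¹ : MatN n) * (↑U⁻¹ : MatN n)) (P : MatN n) := by
    refine LinearMap.ext fun Y => ?_
    apply (adjE χ₂).symm.injective
    have h1 : (adjE χ₂).symm (adjT χ₂.toLinearMap Y) = Y := (adjE χ₂).symm_apply_apply Y
    rw [h1, hB, sw_apply]
    simp only [mul_assoc, Units.mul_inv_cancel_left, Units.inv_mul_cancel_left,
      Units.mul_inv, Units.inv_mul, mul_one, one_mul]
  have hadj3 : adjT χ₃.toLinearMap =
      sw ((↑P⁻¹ : MatN n) * ((↑U⁻¹ : MatN n) * (↑W⁻¹ : MatN n))) ((U : MatN n) * (P : MatN n)) := by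
    refine LinearMap.ext fun Z => ?_
    apply (adjE χ₃).symm.injective
    have h1 : (adjE χ₃).symm (adjT χ₃.toLinearMap Z) = Z := (adjE χ₃).symm_apply_apply Z
    rw [h1, hG, sw_apply]
    simp only [mul_assoc, Units.mul_inv_cancel_left, Units.inv_mul_cancel_left,
      Units.mul_inv, Units.inv_mul, mul_one, one_mul]
  have hχ₂ : χ₂.toLinearMap = sw (P : MatN n) ((↑P⁻¹ : MatN n) * (↑U⁻¹ : MatN n)) := by
    apply adjT_inj
    rw [hadj2, adjT_sw]
  have hχ₃ : χ₃.toLinearMap =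
      sw ((U : MatN n) * (P : MatN n)) ((↑P⁻¹ : MatN n) * ((↑U⁻¹ : MatN n) * (↑W⁻¹ : MatN n))) := by
    apply adjT_inj
    rw [hadj3, adjT_sw]
  -- assemble
  refine ⟨(W : MatN n) * (U : MatN n) * (P : MatN n), (P : MatN n),
    (U : MatN n) * (P : MatN n), (W * U * P).isUnit, P.isUnit, (U * P).isUnit, ?_, ?_, ?_⟩
  · have hbinv : ((P : MatN n))⁻¹ = (↑P⁻¹ : MatN n) :=
      Matrix.inv_eq_right_inv (by rw [Units.mul_inv])
    intro x
    rw [hbinv, hχ₁ x]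
    simp only [mul_assoc]
  · have hcinv : ((U : MatN n) * (P : MatN n))⁻¹ = (↑P⁻¹ : MatN n) * (↑U⁻¹ : MatN n) :=
      Matrix.inv_eq_right_inv (by
        simp only [mul_assoc, Units.mul_inv_cancel_left, Units.mul_inv])
    intro y
    rw [hcinv]
    have := congrFun (congrArg (fun f => f.toFun) hχ₂) y
    simp only [LinearMap.toFun_eq_coe, LinearEquiv.coe_coe] at this
    rw [this, sw_apply]
    try simp only [mul_assoc]
  · have hainv : ((W : MatN n) * (U : MatN n) * (P : MatN n))⁻¹ =
        (↑P⁻¹ : MatN n) * ((↑U⁻¹ : MatN n) * (↑W⁻¹ : MatN n)) :=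
      Matrix.inv_eq_right_inv (by
        simp only [mul_assoc, Units.mul_inv_cancel_left, Units.mul_inv])
    intro z
    rw [hainv]
    have := congrFun (congrArg (fun f => f.toFun) hχ₃) z
    simp only [LinearMap.toFun_eq_coe, LinearEquiv.coe_coe] at this
    rw [this, sw_apply]
    try simp only [mul_assoc]


lemma BE_transpose (i j : Fin n) : (BE i j)ᵀ = (BE j i : MatN n) := by
  ext a b
  simp [Matrix.transpose_apply, single, and_comm]

lemma sum_rot {M : Type*} [AddCommMonoid M] (g : Fin n → Fin n → Fin n → M) :
    (∑ i, ∑ j, ∑ k, g i j k) = ∑ i, ∑ j, ∑ k, g k i j := by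
  rw [Finset.sum_comm]
  exact Finset.sum_congr rfl fun j _ => Finset.sum_comm

lemma kappa_fix : kappaMap n (MatMul n) = MatMul n := by
  rw [MatMul]
  simp only [map_sum, kappaMap_tmul]
  exact (sum_rot _).trans (sum_rot _)

lemma tau_fix : tauMap n (MatMul n) = MatMul n := by
  rw [MatMul]
  simp only [map_sum, tauMap_tmul, BE_transpose]
  exact Finset.sum_comm

lemma perm3 (σ : Equiv.Perm (Fin 3)) :
    (σ⁻¹ 0 = 0 ∧ σ⁻¹ 1 = 1 ∧ σ⁻¹ 2 = 2) ∨ (σ⁻¹ 0 = 2 ∧ σ⁻¹ 1 = 0 ∧ σ⁻¹ 2 = 1) ∨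
    (σ⁻¹ 0 = 1 ∧ σ⁻¹ 1 = 2 ∧ σ⁻¹ 2 = 0) ∨ (σ⁻¹ 0 = 0 ∧ σ⁻¹ 1 = 2 ∧ σ⁻¹ 2 = 1) ∨
    (σ⁻¹ 0 = 2 ∧ σ⁻¹ 1 = 1 ∧ σ⁻¹ 2 = 0) ∨ (σ⁻¹ 0 = 1 ∧ σ⁻¹ 1 = 0 ∧ σ⁻¹ 2 = 2) := by
  revert σ; decide

lemma assemble (hn : 1 ≤ n) (Ψ : WN n ≃ₗ[ℂ] WN n) (χ₁ χ₂ χ₃ : MatN n ≃ₗ[ℂ] MatN n)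
    (d : WN n →ₗ[ℂ] WN n) (hd : d (MatMul n) = MatMul n)
    (hfac : Ψ.toLinearMap =
      (TensorProduct.map χ₁.toLinearMap
        (TensorProduct.map χ₂.toLinearMap χ₃.toLinearMap)).comp d)
    (hM : Ψ (MatMul n) = MatMul n) :
    ∃ a b c : MatN n, IsUnit a ∧ IsUnit b ∧ IsUnit c ∧
      Ψ.toLinearMap = (phiMap n a b c).comp d := by
  have hΦM : TensorProduct.map χ₁.toLinearMap
      (TensorProduct.map χ₂.toLinearMap χ₃.toLinearMap) (MatMul n) = MatMul n := by
    have h1 := LinearMap.congr_fun hfac (MatMul n)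
    rw [LinearMap.comp_apply, hd] at h1
    rw [← h1]
    exact hM
  obtain ⟨a, b, c, ha, hb, hc, h1, h2, h3⟩ := core hn χ₁ χ₂ χ₃ hΦM
  refine ⟨a, b, c, ha, hb, hc, ?_⟩
  rw [hfac]
  congr 1
  ext x y z
  show TensorProduct.map χ₁.toLinearMap (TensorProduct.map χ₂.toLinearMap χ₃.toLinearMap)
      (x ⊗ₜ[ℂ] (y ⊗ₜ[ℂ] z)) = phiMap n a b c (x ⊗ₜ[ℂ] (y ⊗ₜ[ℂ] z))
  simp only [TensorProduct.map_tmul, LinearEquiv.coe_coe, phiMap_tmul]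
  rw [h1, h2, h3]


lemma map_eq_of_tmul (f g : WN n →ₗ[ℂ] WN n)
    (h : ∀ x y z : MatN n, f (x ⊗ₜ[ℂ] (y ⊗ₜ[ℂ] z)) = g (x ⊗ₜ[ℂ] (y ⊗ₜ[ℂ] z))) : f = g := by
  ext x y z
  exact h x y z

end SymAux

/-- The symmetry group of the matrix multiplication tensor is
`PGLₙ × PGLₙ × PGLₙ ⋊ D₃`: any symmetry of `Mₙ` that acts by permuting the three tensor
factors and acting by a linear automorphism on each factor is a product symmetry
`φ_{a,b,c}` composed with one of the six maps `id, κ, κ², τ, κ∘τ, κ²∘τ`. -/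
theorem symmetry_group_of_matMul (n : ℕ) (hn : 1 ≤ n)
    (σ : Equiv.Perm (Fin 3)) (ψ₁ ψ₂ ψ₃ : MatN n ≃ₗ[ℂ] MatN n)
    (Ψ : WN n ≃ₗ[ℂ] WN n)
    (hΨ : ∀ x : Fin 3 → MatN n,
      Ψ (x 0 ⊗ₜ[ℂ] (x 1 ⊗ₜ[ℂ] x 2)) =
        ψ₁ (x (σ⁻¹ 0)) ⊗ₜ[ℂ] (ψ₂ (x (σ⁻¹ 1)) ⊗ₜ[ℂ] ψ₃ (x (σ⁻¹ 2))))
    (hM : Ψ (MatMul n) = MatMul n) :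
    ∃ a b c : MatN n, IsUnit a ∧ IsUnit b ∧ IsUnit c ∧
      ∃ d ∈ ({LinearMap.id, kappaMap n, (kappaMap n).comp (kappaMap n), tauMap n,
              (kappaMap n).comp (tauMap n),
              ((kappaMap n).comp (kappaMap n)).comp (tauMap n)} :
            Set (WN n →ₗ[ℂ] WN n)),
        Ψ.toLinearMap = (phiMap n a b c).comp d := by
  classical
  rcases SymAux.perm3 σ with ⟨h0, h1, h2⟩ | ⟨h0, h1, h2⟩ | ⟨h0, h1, h2⟩ | ⟨h0, h1, h2⟩ |
    ⟨h0, h1, h2⟩ | ⟨h0, h1, h2⟩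
  · -- identity
    have hfac : Ψ.toLinearMap = (TensorProduct.map ψ₁.toLinearMap
        (TensorProduct.map ψ₂.toLinearMap ψ₃.toLinearMap)).comp LinearMap.id := by
      refine SymAux.map_eq_of_tmul _ _ fun x y z => ?_
      have hx := hΨ ![x, y, z]
      rw [h0, h1, h2] at hx
      simp only [Matrix.cons_val_zero, Matrix.cons_val_one, Matrix.head_cons,
        Matrix.cons_val_two, Matrix.tail_cons] at hx
      simp only [LinearEquiv.coe_coe, LinearMap.comp_apply, LinearMap.id_coe, id_eq,
        TensorProduct.map_tmul]
      exact hx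
    obtain ⟨a, b, c, ha, hb, hc, heq⟩ :=
      SymAux.assemble hn Ψ ψ₁ ψ₂ ψ₃ LinearMap.id rfl hfac hM
    exact ⟨a, b, c, ha, hb, hc, LinearMap.id, Set.mem_insert _ _, heq⟩
  · -- κ : σ⁻¹ = (2,0,1)
    have hfac : Ψ.toLinearMap = (TensorProduct.map ψ₁.toLinearMap
        (TensorProduct.map ψ₂.toLinearMap ψ₃.toLinearMap)).comp (kappaMap n) := by
      refine SymAux.map_eq_of_tmul _ _ fun x y z => ?_
      have hx := hΨ ![x, y, z]
      rw [h0, h1, h2] at hx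
      simp only [Matrix.cons_val_zero, Matrix.cons_val_one, Matrix.head_cons,
        Matrix.cons_val_two, Matrix.tail_cons] at hx
      simp only [LinearEquiv.coe_coe, LinearMap.comp_apply, kappaMap_tmul,
        TensorProduct.map_tmul]
      exact hx
    obtain ⟨a, b, c, ha, hb, hc, heq⟩ :=
      SymAux.assemble hn Ψ ψ₁ ψ₂ ψ₃ (kappaMap n) SymAux.kappa_fix hfac hM
    exact ⟨a, b, c, ha, hb, hc, kappaMap n,
      Set.mem_insert_of_mem _ (Set.mem_insert _ _), heq⟩
  · -- κ² : σ⁻¹ = (1,2,0)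
    have hd : ((kappaMap n).comp (kappaMap n)) (MatMul n) = MatMul n := by
      rw [LinearMap.comp_apply, SymAux.kappa_fix, SymAux.kappa_fix]
    have hfac : Ψ.toLinearMap = (TensorProduct.map ψ₁.toLinearMap
        (TensorProduct.map ψ₂.toLinearMap ψ₃.toLinearMap)).comp
          ((kappaMap n).comp (kappaMap n)) := by
      refine SymAux.map_eq_of_tmul _ _ fun x y z => ?_
      have hx := hΨ ![x, y, z]
      rw [h0, h1, h2] at hx
      simp only [Matrix.cons_val_zero, Matrix.cons_val_one, Matrix.head_cons,
        Matrix.cons_val_two, Matrix.tail_cons] at hx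
      simp only [LinearEquiv.coe_coe, LinearMap.comp_apply, kappaMap_tmul,
        TensorProduct.map_tmul]
      exact hx
    obtain ⟨a, b, c, ha, hb, hc, heq⟩ :=
      SymAux.assemble hn Ψ ψ₁ ψ₂ ψ₃ ((kappaMap n).comp (kappaMap n)) hd hfac hM
    exact ⟨a, b, c, ha, hb, hc, (kappaMap n).comp (kappaMap n),
      Set.mem_insert_of_mem _ (Set.mem_insert_of_mem _ (Set.mem_insert _ _)), heq⟩
  · -- τ : σ⁻¹ = (0,2,1)
    have hfac : Ψ.toLinearMap = (TensorProduct.map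
        ((transposeLinearEquiv (Fin n) (Fin n) ℂ ℂ).trans ψ₁).toLinearMap
        (TensorProduct.map ((transposeLinearEquiv (Fin n) (Fin n) ℂ ℂ).trans ψ₂).toLinearMap
          ((transposeLinearEquiv (Fin n) (Fin n) ℂ ℂ).trans ψ₃).toLinearMap)).comp
          (tauMap n) := by
      refine SymAux.map_eq_of_tmul _ _ fun x y z => ?_
      have hx := hΨ ![x, y, z]
      rw [h0, h1, h2] at hx
      simp only [Matrix.cons_val_zero, Matrix.cons_val_one, Matrix.head_cons,
        Matrix.cons_val_two, Matrix.tail_cons] at hx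
      simp only [LinearEquiv.coe_coe, LinearMap.comp_apply, tauMap_tmul,
        TensorProduct.map_tmul, LinearEquiv.trans_apply, transposeLinearEquiv_apply,
        transpose_transpose]
      exact hx
    obtain ⟨a, b, c, ha, hb, hc, heq⟩ :=
      SymAux.assemble hn Ψ ((transposeLinearEquiv (Fin n) (Fin n) ℂ ℂ).trans ψ₁)
        ((transposeLinearEquiv (Fin n) (Fin n) ℂ ℂ).trans ψ₂)
        ((transposeLinearEquiv (Fin n) (Fin n) ℂ ℂ).trans ψ₃)
        (tauMap n) SymAux.tau_fix hfac hM
    exact ⟨a, b, c, ha, hb, hc, tauMap n,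
      Set.mem_insert_of_mem _ (Set.mem_insert_of_mem _ (Set.mem_insert_of_mem _
        (Set.mem_insert _ _))), heq⟩
  · -- κ²τ : σ⁻¹ = (2,1,0)
    have hd : (((kappaMap n).comp (kappaMap n)).comp (tauMap n)) (MatMul n) = MatMul n := by
      simp only [LinearMap.comp_apply, SymAux.tau_fix, SymAux.kappa_fix]
    have hfac : Ψ.toLinearMap = (TensorProduct.map
        ((transposeLinearEquiv (Fin n) (Fin n) ℂ ℂ).trans ψ₁).toLinearMap
        (TensorProduct.map ((transposeLinearEquiv (Fin n) (Fin n) ℂ ℂ).trans ψ₂).toLinearMap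
          ((transposeLinearEquiv (Fin n) (Fin n) ℂ ℂ).trans ψ₃).toLinearMap)).comp
          (((kappaMap n).comp (kappaMap n)).comp (tauMap n)) := by
      refine SymAux.map_eq_of_tmul _ _ fun x y z => ?_
      have hx := hΨ ![x, y, z]
      rw [h0, h1, h2] at hx
      simp only [Matrix.cons_val_zero, Matrix.cons_val_one, Matrix.head_cons,
        Matrix.cons_val_two, Matrix.tail_cons] at hx
      simp only [LinearEquiv.coe_coe, LinearMap.comp_apply, tauMap_tmul, kappaMap_tmul,
        TensorProduct.map_tmul, LinearEquiv.trans_apply, transposeLinearEquiv_apply,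
        transpose_transpose]
      exact hx
    obtain ⟨a, b, c, ha, hb, hc, heq⟩ :=
      SymAux.assemble hn Ψ ((transposeLinearEquiv (Fin n) (Fin n) ℂ ℂ).trans ψ₁)
        ((transposeLinearEquiv (Fin n) (Fin n) ℂ ℂ).trans ψ₂)
        ((transposeLinearEquiv (Fin n) (Fin n) ℂ ℂ).trans ψ₃)
        (((kappaMap n).comp (kappaMap n)).comp (tauMap n)) hd hfac hM
    refine ⟨a, b, c, ha, hb, hc, ((kappaMap n).comp (kappaMap n)).comp (tauMap n),
      ?_, heq⟩
    exact Set.mem_insert_of_mem _ (Set.mem_insert_of_mem _ (Set.mem_insert_of_mem _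
      (Set.mem_insert_of_mem _ (Set.mem_insert_of_mem _ rfl))))
  · -- κτ : σ⁻¹ = (1,0,2)
    have hd : ((kappaMap n).comp (tauMap n)) (MatMul n) = MatMul n := by
      simp only [LinearMap.comp_apply, SymAux.tau_fix, SymAux.kappa_fix]
    have hfac : Ψ.toLinearMap = (TensorProduct.map
        ((transposeLinearEquiv (Fin n) (Fin n) ℂ ℂ).trans ψ₁).toLinearMap
        (TensorProduct.map ((transposeLinearEquiv (Fin n) (Fin n) ℂ ℂ).trans ψ₂).toLinearMap
          ((transposeLinearEquiv (Fin n) (Fin n) ℂ ℂ).trans ψ₃).toLinearMap)).comp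
          ((kappaMap n).comp (tauMap n)) := by
      refine SymAux.map_eq_of_tmul _ _ fun x y z => ?_
      have hx := hΨ ![x, y, z]
      rw [h0, h1, h2] at hx
      simp only [Matrix.cons_val_zero, Matrix.cons_val_one, Matrix.head_cons,
        Matrix.cons_val_two, Matrix.tail_cons] at hx
      simp only [LinearEquiv.coe_coe, LinearMap.comp_apply, tauMap_tmul, kappaMap_tmul,
        TensorProduct.map_tmul, LinearEquiv.trans_apply, transposeLinearEquiv_apply,
        transpose_transpose]
      exact hx
    obtain ⟨a, b, c, ha, hb, hc, heq⟩ :=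
      SymAux.assemble hn Ψ ((transposeLinearEquiv (Fin n) (Fin n) ℂ ℂ).trans ψ₁)
        ((transposeLinearEquiv (Fin n) (Fin n) ℂ ℂ).trans ψ₂)
        ((transposeLinearEquiv (Fin n) (Fin n) ℂ ℂ).trans ψ₃)
        ((kappaMap n).comp (tauMap n)) hd hfac hM
    exact ⟨a, b, c, ha, hb, hc, (kappaMap n).comp (tauMap n),
      Set.mem_insert_of_mem _ (Set.mem_insert_of_mem _ (Set.mem_insert_of_mem _
        (Set.mem_insert_of_mem _ (Set.mem_insert _ _)))), heq⟩
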